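/- Let L be a real semisimple Lie algebra and D : L → L a derivation. Then the semisimple part D_s and nilpotent part D_n of the (complex-linear extension of the) Jordan decomposition of D, as well as the components D_h (real part of spectrum) and D_e = D_s - D_h, are again derivations of L. -/

import Mathlib

open Module LinearMap TensorProduct Finset Polynomial

section Helpers

variable {L : Type*} [LieRing L] [LieAlgebra ℝ L]

/-- abbreviation for "is a derivation" (unbundled). -/
private def IsDer {E : Type*} [LieRing E] (f : E → E) : Prop :=
  ∀ u v : E, f ⁅u, v⁆ = ⁅f u, v⁆ + ⁅u, f v⁆

variable {E : Type*} [LieRing E] [LieAlgebra ℂ E]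

private lemma step_lemma (f : Module.End ℂ E) (hf : IsDer f) (a b : ℂ) (u v : E) :
    (f - (a + b) • 1) ⁅u, v⁆ = ⁅(f - a • 1) u, v⁆ + ⁅u, (f - b • 1) v⁆ := by
  simp only [LinearMap.sub_apply, LinearMap.smul_apply, Module.End.one_apply, hf u v,
    sub_lie, lie_sub, add_smul, smul_lie, lie_smul, LinearMap.add_apply]
  abel

private lemma der_pow_lie (f : Module.End ℂ E) (hf : IsDer f) (a b : ℂ) (n : ℕ) :
    ∀ u v : E, ((f - (a + b) • 1) ^ n) ⁅u, v⁆ =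
      ∑ ij ∈ antidiagonal n,
        n.choose ij.1 • ⁅((f - a • 1) ^ ij.1) u, ((f - b • 1) ^ ij.2) v⁆ := by
  induction n with
  | zero => simp
  | succ n ih =>
    intro u v
    rw [Finset.sum_antidiagonal_choose_succ_nsmul
      (fun i j => ⁅((f - a • 1) ^ i) u, ((f - b • 1) ^ j) v⁆) n]
    rw [pow_succ, Module.End.mul_apply, step_lemma f hf a b, map_add,
      ih ((f - a • 1) u) v, ih u ((f - b • 1) v)]
    rw [add_comm]
    congr 1
    refine Finset.sum_congr rfl fun ij hij => ?_
    rw [Nat.choose_symm_of_eq_add (HasAntidiagonal.mem_antidiagonal.1 hij).symm, pow_succ, Module.End.mul_apply]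

private lemma lie_mem_maxGen (f : Module.End ℂ E) (hf : IsDer f) {a b : ℂ} {u v : E}
    (hu : u ∈ f.maxGenEigenspace a) (hv : v ∈ f.maxGenEigenspace b) :
    ⁅u, v⁆ ∈ f.maxGenEigenspace (a + b) := by
  rw [Module.End.mem_maxGenEigenspace] at hu hv ⊢
  obtain ⟨p, hp⟩ := hu
  obtain ⟨q, hq⟩ := hv
  refine ⟨p + q, ?_⟩
  rw [der_pow_lie f hf a b]
  refine Finset.sum_eq_zero fun ij hij => ?_
  rw [HasAntidiagonal.mem_antidiagonal] at hij
  rcases le_or_gt p ij.1 with h | h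
  · have : ((f - a • 1) ^ ij.1) u = 0 := by
      rw [← Nat.sub_add_cancel h, pow_add, Module.End.mul_apply, hp, map_zero]
    simp [this]
  · have hq' : q ≤ ij.2 := by omega
    have : ((f - b • 1) ^ ij.2) v = 0 := by
      rw [← Nat.sub_add_cancel hq', pow_add, Module.End.mul_apply, hq, map_zero]
    simp [this]

private lemma der_of_eigen [FiniteDimensional ℂ E]
    (f g : Module.End ℂ E) (hf : IsDer f)
    (χ : ℂ → ℂ) (hχ : ∀ a b, χ (a + b) = χ a + χ b)
    (hg : ∀ (a : ℂ) (u : E), u ∈ f.maxGenEigenspace a → g u = χ a • u) :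
    IsDer g := by
  intro u v
  have htop := Module.End.iSup_maxGenEigenspace_eq_top f
  have hu : u ∈ ⨆ a : ℂ, f.maxGenEigenspace a := htop ▸ Submodule.mem_top
  have hv : v ∈ ⨆ a : ℂ, f.maxGenEigenspace a := htop ▸ Submodule.mem_top
  induction hu using Submodule.iSup_induction' with
  | mem a u hu =>
    induction hv using Submodule.iSup_induction' with
    | mem b v hv =>
      rw [hg a u hu, hg b v hv, hg _ _ (lie_mem_maxGen f hf hu hv), hχ, add_smul,
        smul_lie, lie_smul]
    | zero => simp
    | add v w _ _ hv hw => simp only [lie_add, map_add, hv, hw]; abel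
  | zero => simp
  | add u w _ _ hu hw => simp only [add_lie, map_add, hu, hw]; abel

private lemma ss_baseChange [FiniteDimensional ℝ L] {f : Module.End ℝ L}
    (hf : f.IsSemisimple) :
    Module.End.IsSemisimple (f.baseChange ℂ : Module.End ℂ (ℂ ⊗[ℝ] L)) := by
  have h1 : Squarefree (minpoly ℝ f) := hf.minpoly_squarefree
  have h2 : Squarefree ((minpoly ℝ f).map (algebraMap ℝ ℂ)) :=
    ((PerfectField.separable_iff_squarefree.mpr h1).map).squarefree
  apply Module.End.isSemisimple_of_squarefree_aeval_eq_zero h2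
  rw [Polynomial.aeval_map_algebraMap]
  have hφ : f.baseChange ℂ = Module.End.baseChangeHom ℝ ℂ L f := rfl
  rw [hφ, Polynomial.aeval_algHom_apply, minpoly.aeval, map_zero]

private lemma eigen_mem_roots [FiniteDimensional ℝ L] (f : Module.End ℝ L) {a : ℂ}
    (h : Module.End.HasEigenvalue (f.baseChange ℂ : Module.End ℂ (ℂ ⊗[ℝ] L)) a) :
    a ∈ ((LinearMap.charpoly f).map (algebraMap ℝ ℂ)).roots := by
  rw [← LinearMap.charpoly_baseChange]
  have hroot : (minpoly ℂ (f.baseChange ℂ)).IsRoot a :=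
    Module.End.hasEigenvalue_iff_isRoot.mp h
  rw [Polynomial.mem_roots']
  exact ⟨(LinearMap.charpoly_monic _).ne_zero,
    hroot.dvd (LinearMap.minpoly_dvd_charpoly _)⟩

end Helpers

section Main

variable {L : Type*} [LieRing L] [LieAlgebra ℝ L] [FiniteDimensional ℝ L]

private lemma bc_commute {f g : Module.End ℝ L} (hfg : Commute f g) :
    Commute (f.baseChange ℂ : Module.End ℂ (ℂ ⊗[ℝ] L)) (g.baseChange ℂ) := by
  show _ * _ = _ * _
  rw [← LinearMap.baseChange_mul, ← LinearMap.baseChange_mul, hfg.eq]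

private lemma baseChange_isDer (D : LieDerivation ℝ L L) :
    IsDer (⇑((D.toLinearMap : Module.End ℝ L).baseChange ℂ) : ℂ ⊗[ℝ] L → ℂ ⊗[ℝ] L) := by
  intro u v
  induction u using TensorProduct.induction_on with
  | zero => simp
  | tmul a x =>
    induction v using TensorProduct.induction_on with
    | zero => simp
    | tmul b y =>
      show (a * b) ⊗ₜ[ℝ] (D ⁅x, y⁆) = (a * b) ⊗ₜ[ℝ] ⁅D x, y⁆ + (a * b) ⊗ₜ[ℝ] ⁅x, D y⁆
      rw [D.apply_lie_eq_add, tmul_add, add_comm]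
    | add v₁ v₂ h1 h2 => simp only [lie_add, map_add, h1, h2]; abel
  | add u₁ u₂ h1 h2 => simp only [add_lie, map_add, h1, h2]; abel

private lemma scalar_parts (Dall Dn Dh De : Module.End ℝ L)
    (hn : IsNilpotent Dn)
    (hh : Dh.IsSemisimple ∧
      ∀ z : ℂ, z ∈ ((LinearMap.charpoly Dh).map (algebraMap ℝ ℂ)).roots → z.im = 0)
    (he : De.IsSemisimple ∧
      ∀ z : ℂ, z ∈ ((LinearMap.charpoly De).map (algebraMap ℝ ℂ)).roots → z.re = 0)
    (hsum : Dall = Dn + Dh + De)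
    (hc1 : Commute Dn Dh) (hc2 : Commute Dn De) (hc3 : Commute Dh De) :
    ∀ (a : ℂ) (m : ℂ ⊗[ℝ] L),
      m ∈ Module.End.maxGenEigenspace (Dall.baseChange ℂ : Module.End ℂ (ℂ ⊗[ℝ] L)) a →
      (Dh.baseChange ℂ) m = (a.re : ℂ) • m ∧ (De.baseChange ℂ) m = (a - a.re) • m := by
  intro a m hm
  let D' : Module.End ℂ (ℂ ⊗[ℝ] L) := Dall.baseChange ℂ
  let Dh' : Module.End ℂ (ℂ ⊗[ℝ] L) := Dh.baseChange ℂ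
  let De' : Module.End ℂ (ℂ ⊗[ℝ] L) := De.baseChange ℂ
  have hcDh : Commute Dall Dh := by
    rw [hsum]; exact Commute.add_left (Commute.add_left hc1 (Commute.refl Dh)) hc3.symm
  have hcDe : Commute Dall De := by
    rw [hsum]; exact Commute.add_left (Commute.add_left hc2 hc3) (Commute.refl De)
  have hcomm_h : Commute D' Dh' := bc_commute hcDh
  have hcomm_e : Commute D' De' := bc_commute hcDe
  have hcomm_S : Commute D' (Dh' + De') := hcomm_h.add_right hcomm_e
  have hS_ss : Module.End.IsSemisimple (Dh' + De') :=
    Module.End.IsSemisimple.add_of_commute (bc_commute hc3)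
      (ss_baseChange hh.1) (ss_baseChange he.1)
  have hnil : IsNilpotent (D' - (Dh' + De')) := by
    obtain ⟨k, hk⟩ := hn
    refine ⟨k, ?_⟩
    have heq : D' - (Dh' + De') = Dn.baseChange ℂ := by
      show Dall.baseChange ℂ - _ = _
      rw [hsum, LinearMap.baseChange_add, LinearMap.baseChange_add]
      abel
    rw [heq, ← LinearMap.baseChange_pow, hk, LinearMap.baseChange_zero]
  have hS : ∀ w ∈ Module.End.maxGenEigenspace D' a, (Dh' + De') w = a • w := fun w hw =>
    Module.End.apply_eq_of_mem_of_comm_of_isFinitelySemisimple_of_isNil hw hcomm_S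
      hS_ss.isFinitelySemisimple hnil
  set W := Module.End.maxGenEigenspace D' a with hWdef
  have hW : W ∈ Dh'.invtSubmodule := by
    rw [Module.End.mem_invtSubmodule]
    intro x hx
    exact Module.End.mapsTo_maxGenEigenspace_of_comm hcomm_h a hx
  set h : Module.End ℂ W := Dh'.restrict hW with hhdef
  have hcoe : ∀ w : W, (h w : ℂ ⊗[ℝ] L) = Dh' (w : ℂ ⊗[ℝ] L) := fun w =>
    LinearMap.restrict_coe_apply _ _ _
  have key : ∀ b : ℂ, Module.End.HasEigenvalue h b → b = (a.re : ℂ) := by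
    intro b hb
    obtain ⟨w, hw⟩ := hb.exists_hasEigenvector
    have hw1 : Dh' (w : ℂ ⊗[ℝ] L) = b • (w : ℂ ⊗[ℝ] L) := by
      rw [← hcoe w, hw.apply_eq_smul]; rfl
    have hwne : (w : ℂ ⊗[ℝ] L) ≠ 0 := fun hc => hw.2 (Submodule.coe_eq_zero.mp hc)
    have hev_h : Module.End.HasEigenvalue Dh' b :=
      Module.End.hasEigenvalue_of_hasEigenvector ⟨Module.End.mem_eigenspace_iff.mpr hw1, hwne⟩
    have him : b.im = 0 := hh.2 b (eigen_mem_roots Dh hev_h)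
    have hw2 : De' (w : ℂ ⊗[ℝ] L) = (a - b) • (w : ℂ ⊗[ℝ] L) := by
      have h1 := hS (w : ℂ ⊗[ℝ] L) w.2
      rw [LinearMap.add_apply, hw1] at h1
      rw [sub_smul, ← h1]
      abel
    have hev_e : Module.End.HasEigenvalue De' (a - b) :=
      Module.End.hasEigenvalue_of_hasEigenvector ⟨Module.End.mem_eigenspace_iff.mpr hw2, hwne⟩
    have hre : (a - b).re = 0 := he.2 _ (eigen_mem_roots De hev_e)
    rw [Complex.sub_re] at hre
    apply Complex.ext
    · simpa using (by linarith : b.re = a.re)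
    · simpa using him
  have hress : Module.End.IsSemisimple h := (ss_baseChange hh.1).restrict hW
  have hle : (⊤ : Submodule ℂ W) ≤ Module.End.eigenspace h (a.re : ℂ) := by
    rw [← Module.End.iSup_maxGenEigenspace_eq_top h]
    refine iSup_le fun b => ?_
    rw [hress.isFinitelySemisimple.maxGenEigenspace_eq_eigenspace]
    rcases eq_or_ne b ((a.re : ℂ)) with rfl | hb
    · exact le_rfl
    · rcases eq_or_ne (Module.End.eigenspace h b) ⊥ with hbot | hbot
      · rw [hbot]; exact bot_le
      · exact absurd (key b (Module.End.hasEigenvalue_iff.mpr hbot)) hb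
  have hDh'm : Dh' m = (a.re : ℂ) • m := by
    have h1 : h ⟨m, hm⟩ = (a.re : ℂ) • (⟨m, hm⟩ : W) :=
      Module.End.mem_eigenspace_iff.mp (hle Submodule.mem_top)
    have h2 := congrArg (Subtype.val) h1
    rw [hcoe ⟨m, hm⟩] at h2
    exact h2
  refine ⟨hDh'm, ?_⟩
  have h3 := hS m hm
  rw [LinearMap.add_apply, hDh'm] at h3
  rw [sub_smul, ← h3]
  abel

/-- Pull back the derivation property from the base change. -/
private lemma isDer_of_baseChange (g : Module.End ℝ L)
    (hg : IsDer (⇑(g.baseChange ℂ) : ℂ ⊗[ℝ] L → ℂ ⊗[ℝ] L)) :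
    ∀ x y : L, g ⁅x, y⁆ = ⁅g x, y⁆ + ⁅x, g y⁆ := by
  intro x y
  let r : ℂ ⊗[ℝ] L →ₗ[ℝ] L :=
    (TensorProduct.lid ℝ L).toLinearMap ∘ₗ (TensorProduct.map Complex.reLm LinearMap.id)
  have hr : ∀ z : L, r ((1 : ℂ) ⊗ₜ[ℝ] z) = z := by
    intro z
    simp [r, TensorProduct.map_tmul, Complex.one_re]
  have h1 := hg ((1 : ℂ) ⊗ₜ[ℝ] x) ((1 : ℂ) ⊗ₜ[ℝ] y)
  have h1' : (1 : ℂ) ⊗ₜ[ℝ] (g ⁅x, y⁆) = (1 : ℂ) ⊗ₜ[ℝ] ⁅g x, y⁆ + (1 : ℂ) ⊗ₜ[ℝ] ⁅x, g y⁆ := by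
    simpa [LieAlgebra.ExtendScalars.bracket_tmul, LinearMap.baseChange_tmul] using h1
  have h2 := congrArg r h1'
  simpa only [map_add, hr] using h2

end Main


/-- For a derivation `D` of a finite-dimensional real semisimple Lie algebra `L`, the
components `D_n`, `D_h`, `D_e` (and hence `D_s = D_h + D_e`) of the real Jordan
decomposition of `D` are again derivations of `L`. -/
theorem stmt_14 (L : Type*) [LieRing L] [LieAlgebra ℝ L] [FiniteDimensional ℝ L]
    [LieAlgebra.IsSemisimple ℝ L]
    (D : LieDerivation ℝ L L)
    (Dn Dh De : Module.End ℝ L)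
    (hn : IsNilpotent Dn)
    (hh : Dh.IsSemisimple ∧
      ∀ z : ℂ, z ∈ ((LinearMap.charpoly Dh).map (algebraMap ℝ ℂ)).roots → z.im = 0)
    (he : De.IsSemisimple ∧
      ∀ z : ℂ, z ∈ ((LinearMap.charpoly De).map (algebraMap ℝ ℂ)).roots → z.re = 0)
    (hsum : (D.toLinearMap : Module.End ℝ L) = Dn + Dh + De)
    (hc1 : Commute Dn Dh) (hc2 : Commute Dn De) (hc3 : Commute Dh De) :
    (∀ x y : L, Dn ⁅x, y⁆ = ⁅Dn x, y⁆ + ⁅x, Dn y⁆) ∧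
      (∀ x y : L, Dh ⁅x, y⁆ = ⁅Dh x, y⁆ + ⁅x, Dh y⁆) ∧
      (∀ x y : L, De ⁅x, y⁆ = ⁅De x, y⁆ + ⁅x, De y⁆) ∧
      (∀ x y : L, (Dh + De) ⁅x, y⁆ = ⁅(Dh + De) x, y⁆ + ⁅x, (Dh + De) y⁆) := by
  have hder : IsDer (⇑((D.toLinearMap : Module.End ℝ L).baseChange ℂ) :
      ℂ ⊗[ℝ] L → ℂ ⊗[ℝ] L) := baseChange_isDer D
  have hsc := scalar_parts (D.toLinearMap : Module.End ℝ L) Dn Dh De hn hh he hsum hc1 hc2 hc3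
  have hDh : ∀ x y : L, Dh ⁅x, y⁆ = ⁅Dh x, y⁆ + ⁅x, Dh y⁆ := by
    apply isDer_of_baseChange
    apply der_of_eigen ((D.toLinearMap : Module.End ℝ L).baseChange ℂ) (Dh.baseChange ℂ) hder
      (fun a => (a.re : ℂ)) (fun a b => by push_cast [Complex.add_re]; ring)
    exact fun a u hu => (hsc a u hu).1
  have hDe : ∀ x y : L, De ⁅x, y⁆ = ⁅De x, y⁆ + ⁅x, De y⁆ := by
    apply isDer_of_baseChange
    apply der_of_eigen ((D.toLinearMap : Module.End ℝ L).baseChange ℂ) (De.baseChange ℂ) hder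
      (fun a => a - (a.re : ℂ)) (fun a b => by push_cast [Complex.add_re]; ring)
    exact fun a u hu => (hsc a u hu).2
  have hDn : ∀ x y : L, Dn ⁅x, y⁆ = ⁅Dn x, y⁆ + ⁅x, Dn y⁆ := by
    intro x y
    have hDn_eq : ∀ z : L, Dn z = D z - Dh z - De z := by
      intro z
      have := congrFun (congrArg (⇑) hsum) z
      simp only [LinearMap.add_apply] at this
      rw [show (D.toLinearMap : Module.End ℝ L) z = D z from rfl] at this
      rw [this]; abel
    rw [hDn_eq, hDn_eq, hDn_eq, D.apply_lie_eq_add, hDh x y, hDe x y, sub_lie, sub_lie,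
      lie_sub, lie_sub]
    abel
  refine ⟨hDn, hDh, hDe, fun x y => ?_⟩
  simp only [LinearMap.add_apply, hDh x y, hDe x y, add_lie, lie_add]
  abel
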